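/- Let n ≥ 1, s ≥ 1, m ≥ 1, and suppose q_n^s = Σ_{k=1}^m (a_k·x)^{2s} with a_1,…,a_m ∈ ℂ^n is a first caliber decomposition, i.e., the value (a_k·a_k)^s is the same for all k. Then (a_k·a_k)^s = (1/m) · ∏_{j=0}^{s−1} (2j+n)/(2j+1) for every k = 1,…,m. -/

import Mathlib

open MvPolynomial

noncomputable def qpoly (n : ℕ) : MvPolynomial (Fin n) ℂ :=
  ∑ i : Fin n, X i ^ 2

noncomputable def linForm {n : ℕ} (a : Fin n → ℂ) : MvPolynomial (Fin n) ℂ :=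
  ∑ i : Fin n, C (a i) * X i

noncomputable def dotC {n : ℕ} (a b : Fin n → ℂ) : ℂ :=
  ∑ i : Fin n, a i * b i

noncomputable def diffOp {n : ℕ} (φ f : MvPolynomial (Fin n) ℂ) : MvPolynomial (Fin n) ℂ :=
  ∑ d ∈ φ.support, φ.coeff d •
    ((List.ofFn fun i : Fin n =>
        ((pderiv i).toLinearMap : MvPolynomial (Fin n) ℂ →ₗ[ℂ] MvPolynomial (Fin n) ℂ) ^ d i).prod f)

noncomputable def lap {n : ℕ} (f : MvPolynomial (Fin n) ℂ) : MvPolynomial (Fin n) ℂ :=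
  ∑ i : Fin n, pderiv i (pderiv i f)

/-! ### Auxiliary lemmas -/

lemma pderiv_qpoly (n : ℕ) (i : Fin n) : pderiv i (qpoly n) = 2 * X i := by
  rw [qpoly, map_sum, Finset.sum_eq_single i]
  · simp [pow_two, pderiv_mul, pderiv_X]; ring
  · intro b _ hb; simp [pow_two, pderiv_mul, pderiv_X, Pi.single_apply, hb]
  · simp

lemma pderiv_linForm {n : ℕ} (a : Fin n → ℂ) (i : Fin n) : pderiv i (linForm a) = C (a i) := by
  rw [linForm, map_sum, Finset.sum_eq_single i]
  · simp [pderiv_mul, pderiv_X]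
  · intro b _ hb; simp [pderiv_mul, pderiv_X, Pi.single_apply, hb]
  · simp

lemma pderiv_qpow (n : ℕ) (p : ℕ) (i : Fin n) :
    pderiv i (qpoly n ^ p) = C (2 * (p : ℂ)) * (X i * qpoly n ^ (p - 1)) := by
  rw [Derivation.leibniz_pow, smul_eq_mul, pderiv_qpoly, nsmul_eq_mul,
    ← map_natCast (C : ℂ →+* MvPolynomial (Fin n) ℂ) p]
  simp only [map_mul, map_ofNat]
  ring

lemma pderiv_linpow {n : ℕ} (a : Fin n → ℂ) (p : ℕ) (i : Fin n) :
    pderiv i (linForm a ^ p) = C ((p : ℂ) * a i) * linForm a ^ (p - 1) := by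
  rw [Derivation.leibniz_pow, smul_eq_mul, pderiv_linForm, nsmul_eq_mul,
    ← map_natCast (C : ℂ →+* MvPolynomial (Fin n) ℂ) p]
  simp only [map_mul]
  ring

lemma lap_qpow (n : ℕ) (p : ℕ) :
    lap (qpoly n ^ (p + 1)) =
      C (2 * ((p : ℂ) + 1) * (2 * p + n)) * qpoly n ^ p := by
  have step : ∀ i : Fin n, pderiv i (pderiv i (qpoly n ^ (p+1))) =
      C (2 * ((p:ℂ)+1)) * qpoly n ^ p
        + C (2 * ((p:ℂ)+1) * (2 * p)) * (X i ^ 2 * qpoly n ^ (p-1)) := by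
    intro i
    rw [pderiv_qpow]
    have h1 : C (2 * (((p+1 : ℕ)) : ℂ)) * (X i * qpoly n ^ ((p+1) - 1))
        = C (2 * ((p:ℂ)+1)) * (X i * qpoly n ^ p) := by push_cast; ring_nf
    rw [h1, pderiv_mul, pderiv_mul, pderiv_qpow, pderiv_X, pderiv_C]
    simp only [map_mul, zero_mul, zero_add, Pi.single_eq_same]
    ring
  rw [lap, Finset.sum_congr rfl fun i _ => step i, Finset.sum_add_distrib,
    Finset.sum_const, ← Finset.mul_sum]
  have hq : (∑ i : Fin n, X i ^ 2 * qpoly n ^ (p-1)) = qpoly n ^ (p - 1 + 1) := by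
    rw [← Finset.sum_mul, ← qpoly, pow_succ]
    ring
  rw [hq, Finset.card_univ, Fintype.card_fin, nsmul_eq_mul,
    ← map_natCast (C : ℂ →+* MvPolynomial (Fin n) ℂ) n]
  cases p with
  | zero => simp; ring
  | succ u =>
    have h2 : u + 1 - 1 + 1 = u + 1 := rfl
    rw [h2, ← mul_assoc, ← map_mul, ← add_mul, ← map_add]
    congr 1
    ring

lemma lap_linpow {n : ℕ} (a : Fin n → ℂ) (p : ℕ) :
    lap (linForm a ^ (p + 2)) =
      C (((p : ℂ) + 2) * ((p : ℂ) + 1) * dotC a a) * linForm a ^ p := by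
  have step : ∀ i : Fin n, pderiv i (pderiv i (linForm a ^ (p+2))) =
      C (((p:ℂ)+2) * ((p:ℂ)+1) * (a i * a i)) * linForm a ^ p := by
    intro i
    rw [pderiv_linpow]
    have h1 : p + 2 - 1 = p + 1 := rfl
    rw [h1, pderiv_mul, pderiv_linpow, pderiv_C]
    have h2 : p + 1 - 1 = p := rfl
    rw [h2]
    push_cast
    simp only [map_mul, map_add]
    ring
  rw [lap, Finset.sum_congr rfl fun i _ => step i]
  have hrw : ∀ i : Fin n, C (((p:ℂ)+2) * ((p:ℂ)+1) * (a i * a i)) * linForm a ^ p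
      = C (a i * a i) * (C (((p:ℂ)+2) * ((p:ℂ)+1)) * linForm a ^ p) := by
    intro i; simp only [map_mul]; ring
  rw [Finset.sum_congr rfl fun i _ => hrw i, ← Finset.sum_mul, ← map_sum, ← dotC]
  simp only [map_mul]
  ring

/-- The Laplacian as a linear map. -/
noncomputable def lapL (n : ℕ) : MvPolynomial (Fin n) ℂ →ₗ[ℂ] MvPolynomial (Fin n) ℂ :=
  ∑ i : Fin n, ((pderiv i).toLinearMap).comp ((pderiv i).toLinearMap)

lemma lapL_apply {n : ℕ} (f : MvPolynomial (Fin n) ℂ) : lapL n f = lap f := by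
  simp [lapL, lap, LinearMap.sum_apply]

lemma lapL_pow_C_mul {n : ℕ} (c : ℂ) (f : MvPolynomial (Fin n) ℂ) (s : ℕ) :
    (lapL n ^ s) (C c * f) = C c * (lapL n ^ s) f := by
  rw [← smul_eq_C_mul, ← smul_eq_C_mul, map_smul]

lemma itA (n : ℕ) : ∀ s : ℕ, (lapL n ^ s) (qpoly n ^ s)
    = C (∏ j ∈ Finset.range s, ((2 * (j:ℂ) + 2) * (2 * (j:ℂ) + n))) := by
  intro s
  induction s with
  | zero => simp
  | succ t ih =>
    rw [pow_succ, Module.End.mul_apply, lapL_apply, lap_qpow, lapL_pow_C_mul, ih,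
      ← map_mul, Finset.prod_range_succ]
    congr 1
    ring

lemma itB {n : ℕ} (a : Fin n → ℂ) : ∀ s : ℕ, (lapL n ^ s) (linForm a ^ (2 * s))
    = C (((2 * s).factorial : ℂ) * dotC a a ^ s) := by
  intro s
  induction s with
  | zero => simp
  | succ t ih =>
    have h2 : 2 * (t + 1) = 2 * t + 2 := by ring
    rw [pow_succ, Module.End.mul_apply, lapL_apply, h2, lap_linpow, lapL_pow_C_mul, ih,
      ← map_mul]
    congr 1
    rw [show 2 * t + 2 = (2*t+1) + 1 from rfl, Nat.factorial_succ, Nat.factorial_succ]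
    push_cast
    ring

lemma fact_prod (s : ℕ) : (((2 * s).factorial : ℂ))
    = ∏ j ∈ Finset.range s, ((2 * (j:ℂ) + 1) * (2 * (j:ℂ) + 2)) := by
  induction s with
  | zero => simp
  | succ t ih =>
    rw [Finset.prod_range_succ, ← ih, show 2 * (t+1) = (2*t+1)+1 from rfl,
      Nat.factorial_succ, Nat.factorial_succ]
    push_cast
    ring

/-- If q_n^s = Σ_{k=1}^m (a_k·x)^{2s} is a first caliber decomposition, then
(a_k·a_k)^s = (1/m) · ∏_{j=0}^{s−1} (2j+n)/(2j+1) for every k. -/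
theorem first_caliber_value (n s m : ℕ) (hn : 1 ≤ n) (hs : 1 ≤ s) (hm : 1 ≤ m)
    (a : Fin m → Fin n → ℂ)
    (hdec : qpoly n ^ s = ∑ k : Fin m, linForm (a k) ^ (2 * s))
    (hfc : ∀ k l : Fin m, (dotC (a k) (a k)) ^ s = (dotC (a l) (a l)) ^ s) :
    ∀ k : Fin m, (dotC (a k) (a k)) ^ s =
      (1 / (m : ℂ)) * ∏ j ∈ Finset.range s, ((2 * (j : ℂ) + (n : ℂ)) / (2 * (j : ℂ) + 1)) := by
  intro k
  set c := dotC (a k) (a k) ^ s with hc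
  have h := congrArg (lapL n ^ s) hdec
  rw [itA, map_sum] at h
  have h2 : ∀ l : Fin m, (lapL n ^ s) (linForm (a l) ^ (2 * s))
      = C (((2 * s).factorial : ℂ) * c) := by
    intro l
    rw [itB, hfc l k]
  rw [Finset.sum_congr rfl fun l _ => h2 l, Finset.sum_const, Finset.card_univ,
    Fintype.card_fin, nsmul_eq_mul, ← map_natCast (C : ℂ →+* MvPolynomial (Fin n) ℂ) m,
    ← map_mul] at h
  have heq : (∏ j ∈ Finset.range s, ((2 * (j:ℂ) + 2) * (2 * (j:ℂ) + n)))
      = (m : ℂ) * (((2 * s).factorial : ℂ) * c) := C_injective _ _ h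
  set A := ∏ j ∈ Finset.range s, (2 * (j:ℂ) + n) with hA
  set B := ∏ j ∈ Finset.range s, (2 * (j:ℂ) + 1) with hB
  set D := ∏ j ∈ Finset.range s, (2 * (j:ℂ) + 2) with hD
  have hDA : (∏ j ∈ Finset.range s, ((2 * (j:ℂ) + 2) * (2 * (j:ℂ) + n))) = D * A :=
    Finset.prod_mul_distrib
  have hBD : (((2 * s).factorial : ℂ)) = B * D := by
    rw [fact_prod]; exact Finset.prod_mul_distrib
  have hquot : (∏ j ∈ Finset.range s, ((2 * (j:ℂ) + n) / (2 * (j:ℂ) + 1))) = A / B :=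
    Finset.prod_div_distrib _ _
  have hBne : B ≠ 0 := by
    rw [hB]
    apply Finset.prod_ne_zero_iff.mpr
    intro j _
    have : ((2 * j + 1 : ℕ) : ℂ) ≠ 0 := Nat.cast_ne_zero.mpr (by omega)
    push_cast at this
    convert this using 1
  have hDne : D ≠ 0 := by
    rw [hD]
    apply Finset.prod_ne_zero_iff.mpr
    intro j _
    have : ((2 * j + 2 : ℕ) : ℂ) ≠ 0 := Nat.cast_ne_zero.mpr (by omega)
    push_cast at this
    convert this using 1
  have hmne : (m : ℂ) ≠ 0 := Nat.cast_ne_zero.mpr (by omega)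
  rw [hquot]
  rw [hDA, hBD] at heq
  have key : D * A = D * (c * ((m : ℂ) * B)) := by linear_combination heq
  have hAc : A = c * ((m : ℂ) * B) := mul_left_cancel₀ hDne key
  rw [hAc]
  field_simp
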